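/- Let d ≥ 2 and let F be a subgroup of the symmetric group Sym(d) acting 2-transitively on {1,…,d}. Let F(1) denote the stabilizer of the point 1 in F, and suppose there is a normal subgroup S of F(1) which is simple non-abelian, has index at most 2 in F(1), and is contained in every non-trivial normal subgroup of F(1). Then every normal subgroup N of F such that the quotient F/N is solvable satisfies [F : N] ≤ 2. -/

import Mathlib

private theorem stmt_6_aux (d : ℕ) (pt : Fin d) (F : Subgroup (Equiv.Perm (Fin d)))
    (h2t : ∀ a b c e : Fin d, a ≠ b → c ≠ e → ∃ σ ∈ F, σ a = c ∧ σ b = e)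
    (S : Subgroup ↥(MulAction.stabilizer F pt))
    [S.Normal] [IsSimpleGroup S] (hna : ∃ a b : S, a * b ≠ b * a)
    (hidx : S.index ≤ 2)
    (hmin : ∀ N : Subgroup ↥(MulAction.stabilizer F pt),
      N.Normal → N ≠ ⊥ → S ≤ N)
    (N : Subgroup F) [N.Normal] (hsolv : IsSolvable (F ⧸ N)) :
    N.index ≤ 2 := by
  classical
  -- the natural map from the stabilizer to F ⧸ N
  set φ : ↥(MulAction.stabilizer F pt) →* ↥F ⧸ N :=
    (QuotientGroup.mk' N).comp (MulAction.stabilizer F pt).subtype with hφdef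
  have hker : φ.ker = N.subgroupOf (MulAction.stabilizer F pt) := by
    ext x
    simp [hφdef, MonoidHom.mem_ker, QuotientGroup.eq_one_iff, Subgroup.mem_subgroupOf]
  -- N ∩ (MulAction.stabilizer F pt) is nontrivial, since otherwise (MulAction.stabilizer F pt) embeds in the solvable group F ⧸ N,
  -- contradicting that S ≤ (MulAction.stabilizer F pt) is simple non-abelian.
  have hSns : ¬ IsSolvable ↥(MulAction.stabilizer F pt) := by
    intro hs
    obtain ⟨a, b, hab⟩ := hna
    haveI : Group.IsSolvable ↥(MulAction.stabilizer F pt) := hs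
    exact hab (IsSimpleGroup.comm_iff_isSolvable.mpr inferInstance a b)
  have hM : N.subgroupOf (MulAction.stabilizer F pt) ≠ ⊥ := by
    intro h
    have hinj : Function.Injective φ := by
      rw [← MonoidHom.ker_eq_bot_iff, hker, h]
    haveI : Group.IsSolvable (↥F ⧸ N) := hsolv
    exact hSns (solvable_of_solvable_injective hinj)
  have hNbot : N ≠ ⊥ := by
    intro h
    exact hM (by rw [h, Subgroup.bot_subgroupOf])
  -- N is transitive on Fin d
  have htrans : ∀ p q : Fin d, ∃ n : ↥F, n ∈ N ∧ ((n : Equiv.Perm (Fin d)) p = q) := by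
    have : ∃ n : ↥F, n ∈ N ∧ n ≠ 1 := by
      by_contra h
      push_neg at h
      exact hNbot (Subgroup.eq_bot_iff_forall N |>.mpr h)
    obtain ⟨n₀, hn₀N, hn₀⟩ := this
    have : ∃ a : Fin d, (n₀ : Equiv.Perm (Fin d)) a ≠ a := by
      by_contra h
      push_neg at h
      exact hn₀ (Subtype.ext (Equiv.ext h))
    obtain ⟨a, ha⟩ := this
    intro p q
    by_cases hpq : p = q
    · exact ⟨1, one_mem N, by simp [hpq]⟩
    · obtain ⟨g, hgF, hga, hgb⟩ :=
        h2t a ((n₀ : Equiv.Perm (Fin d)) a) p q (Ne.symm ha) hpq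
      set g' : ↥F := ⟨g, hgF⟩ with hg'def
      refine ⟨g' * n₀ * g'⁻¹, Subgroup.Normal.conj_mem ‹N.Normal› n₀ hn₀N g', ?_⟩
      have hinv : g.symm p = a := by rw [← hga]; simp
      show ((g : Equiv.Perm (Fin d)) * (n₀ : Equiv.Perm (Fin d)) * g⁻¹) p = q
      simp only [Equiv.Perm.mul_apply, Equiv.Perm.inv_def]
      rw [hinv, hgb]
  -- Frattini argument: φ is surjective
  have hsurj : Function.Surjective φ := by
    intro x
    obtain ⟨g, rfl⟩ := QuotientGroup.mk'_surjective N x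
    obtain ⟨n, hnN, hn⟩ := htrans pt ((g : Equiv.Perm (Fin d)) pt)
    have hs : n⁻¹ * g ∈ (MulAction.stabilizer F pt) := by
      rw [MulAction.mem_stabilizer_iff]
      have h1 : ((n⁻¹ * g : ↥F) : Equiv.Perm (Fin d)) pt = pt := by
        show ((n : Equiv.Perm (Fin d))⁻¹ * (g : Equiv.Perm (Fin d))) pt = pt
        simp only [Equiv.Perm.mul_apply]
        rw [← hn]
        simp
      exact h1
    refine ⟨⟨n⁻¹ * g, hs⟩, ?_⟩
    show QuotientGroup.mk' N (n⁻¹ * g) = QuotientGroup.mk' N g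
    rw [QuotientGroup.mk'_eq_mk']
    exact ⟨g⁻¹ * n * g, by simpa using Subgroup.Normal.conj_mem ‹N.Normal› n hnN g⁻¹,
      by group⟩
  -- hence N.index = (N.subgroupOf (MulAction.stabilizer F pt)).index
  have hindex : N.index = (N.subgroupOf (MulAction.stabilizer F pt)).index := by
    have e : (↥(MulAction.stabilizer F pt) ⧸ φ.ker) ≃* (↥F ⧸ N) :=
      QuotientGroup.quotientKerEquivOfSurjective φ hsurj
    have h1 : N.index = Nat.card (↥F ⧸ N) := rfl
    have h2 : (N.subgroupOf (MulAction.stabilizer F pt)).index = Nat.card (↥(MulAction.stabilizer F pt) ⧸ N.subgroupOf (MulAction.stabilizer F pt)) := rfl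
    rw [h1, h2, ← hker]
    exact (Nat.card_congr e.toEquiv).symm
  -- S ≤ N.subgroupOf (MulAction.stabilizer F pt) by minimality
  have hSle : S ≤ N.subgroupOf (MulAction.stabilizer F pt) := hmin _ inferInstance hM
  have hdvd : (N.subgroupOf (MulAction.stabilizer F pt)).index ∣ S.index := Subgroup.index_dvd_of_le hSle
  have hfin : Finite ↥(MulAction.stabilizer F pt) := Subtype.finite
  have hSpos : 0 < S.index := Nat.pos_of_ne_zero Subgroup.index_ne_zero_of_finite
  calc N.index = (N.subgroupOf (MulAction.stabilizer F pt)).index := hindex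
    _ ≤ S.index := Nat.le_of_dvd hSpos hdvd
    _ ≤ 2 := hidx

/-- Let `d ≥ 2` and let `F ≤ Sym(d)` be 2-transitive on `{1,…,d}`.
Suppose the point stabilizer `F(1)` has a normal subgroup `S` which is simple
non-abelian, of index at most 2, and contained in every non-trivial normal subgroup of
`F(1)`. Then every normal subgroup `N` of `F` with `F/N` solvable has index `≤ 2`. -/
theorem stmt_6 (d : ℕ) (hd : 2 ≤ d) (F : Subgroup (Equiv.Perm (Fin d)))
    (h2t : ∀ a b c e : Fin d, a ≠ b → c ≠ e → ∃ σ ∈ F, σ a = c ∧ σ b = e)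
    (S : Subgroup ↥(MulAction.stabilizer F (⟨0, by omega⟩ : Fin d)))
    [S.Normal] [IsSimpleGroup S] (hna : ∃ a b : S, a * b ≠ b * a)
    (hidx : S.index ≤ 2)
    (hmin : ∀ N : Subgroup ↥(MulAction.stabilizer F (⟨0, by omega⟩ : Fin d)),
      N.Normal → N ≠ ⊥ → S ≤ N)
    (N : Subgroup F) [N.Normal] (hsolv : IsSolvable (F ⧸ N)) :
    N.index ≤ 2 := by
  exact stmt_6_aux d ⟨0, Nat.lt_of_lt_of_le Nat.zero_lt_two hd⟩ F h2t S hna hidx hmin N hsolv
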